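/- Let n ≥ 3, |A| ≥ 3, and let b be an ex-post equilibrium for the class of VCG games over (N,A,(ℝ₊^A)^n). Then b_i(Z_i^{(a,s)})(a) − b_i(Z_i^{(a,s)})(a') = s for every agent i, every s ≥ 0, and all alternatives a, a' ∈ A with a' ≠ a. -/

import Mathlib

open Finset

variable {N A : Type*}

/-- `M` is a social-welfare maximizer for the coalition `S`:
for every announced profile, the chosen alternative maximizes the announced welfare of `S`. -/
def IsSWM (S : Finset N) (M : (N → A → ℝ) → A) : Prop :=
  ∀ w : N → A → ℝ, ∀ a : A, ∑ j ∈ S, w j a ≤ ∑ j ∈ S, w j (M w)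

/-- `h` is a valid vector of VCG transfer functions: `h i` does not depend on
agent `i`'s own announcement. -/
def ValidH (h : N → (N → A → ℝ) → ℝ) : Prop :=
  ∀ i : N, ∀ β β' : N → A → ℝ, (∀ j, j ≠ i → β j = β' j) → h i β = h i β'

/-- Utility of agent `i` of coalition `S`, with true valuation `vi`, when the announced
profile is `β`, under the mechanism `M` and transfers `h`. -/
noncomputable def utility [DecidableEq N] (S : Finset N) (M : (N → A → ℝ) → A)
    (h : N → (N → A → ℝ) → ℝ) (i : N) (vi : A → ℝ) (β : N → A → ℝ) : ℝ :=
  vi (M β) + ∑ j ∈ S.erase i, β j (M β) - h i β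

/-- The strategy profile `b` (restricted to `S`) is an ex-post equilibrium of the
VCG game `Γ(S, M, h, V)`: no agent of `S` can profit from a unilateral deviation,
at any profile of true valuations drawn from `V`. -/
def ExPostEq [DecidableEq N] (S : Finset N) (M : (N → A → ℝ) → A)
    (h : N → (N → A → ℝ) → ℝ) (V : N → Set (A → ℝ))
    (b : N → (A → ℝ) → A → ℝ) : Prop :=
  ∀ i ∈ S, ∀ v : N → A → ℝ, (∀ j ∈ S, v j ∈ V j) → ∀ d : A → ℝ,
    utility S M h i (v i) (Function.update (fun j => b j (v j)) i d) ≤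
      utility S M h i (v i) (fun j => b j (v j))

/-- `b` is an ex-post equilibrium for the class of VCG games over `(N, A, V)`. -/
def ExPostClass [DecidableEq N] (V : N → Set (A → ℝ))
    (b : N → (A → ℝ) → A → ℝ) : Prop :=
  ∀ S : Finset N, S.Nonempty → ∀ M : (N → A → ℝ) → A, IsSWM S M →
    ∀ h : N → (N → A → ℝ) → ℝ, ValidH h → ExPostEq S M h V b

/-- The valuation assigning value `s` to the alternative `a` and `0` to every other one. -/
noncomputable def Zval [DecidableEq A] (a : A) (s : ℝ) : A → ℝ :=
  fun x => if x = a then s else 0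

section Aux

variable [Fintype N] [DecidableEq N] [Fintype A] [DecidableEq A]

lemma zval_nonneg {a : A} {s : ℝ} (hs : 0 ≤ s) : ∀ x, 0 ≤ Zval a s x := by
  intro x
  unfold Zval
  split
  · exact hs
  · exact le_rfl

lemma zval_self {a : A} {s : ℝ} : Zval a s a = s := by simp [Zval]

lemma zval_ne {a x : A} {s : ℝ} (h : x ≠ a) : Zval a s x = 0 := by simp [Zval, h]

/-- The fundamental consequence of the ex post equilibrium property: whenever `y`
maximizes the total announced welfare of a coalition `S`, it also maximizes, for each
member `i` of `S`, the sum of `i`'s true valuation and the other members' announcements. -/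
lemma key (b : N → (A → ℝ) → A → ℝ)
    (hb : ExPostClass (fun _ : N => {v : A → ℝ | ∀ a, 0 ≤ v a}) b)
    (S : Finset N) (hS : S.Nonempty) (v : N → A → ℝ)
    (hv : ∀ j, ∀ a, 0 ≤ v j a) (i : N) (hi : i ∈ S) (y x : A)
    (hy : ∀ z, ∑ j ∈ S, b j (v j) z ≤ ∑ j ∈ S, b j (v j) y) :
    v i x + ∑ j ∈ S.erase i, b j (v j) x ≤ v i y + ∑ j ∈ S.erase i, b j (v j) y := by
  classical
  by_cases hxy : y = x
  · subst hxy; exact le_rfl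
  set β : N → A → ℝ := fun j => b j (v j) with hβ
  set C : A → ℝ := fun z => ∑ j ∈ S.erase i, β j z with hC
  have hAne : (Finset.univ : Finset A).Nonempty := ⟨x, mem_univ x⟩
  set K : ℝ := 1 + Finset.univ.sup' hAne (fun z => C z - C x) with hK
  set d : A → ℝ := fun z => if z = x then K else 0 with hd
  set β' : N → A → ℝ := Function.update β i d with hβ'
  have hβ'erase : ∀ j ∈ S.erase i, β' j = β j := by
    intro j hj
    exact Function.update_of_ne (Finset.ne_of_mem_erase hj) _ _
  have hsumβ' : ∀ z, ∑ j ∈ S, β' j z = d z + C z := by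
    intro z
    rw [← Finset.add_sum_erase _ _ hi]
    have h1 : β' i = d := Function.update_self _ _ _
    rw [h1]
    congr 1
    exact Finset.sum_congr rfl (fun j hj => by rw [hβ'erase j hj])
  have hstrict : ∀ z, z ≠ x → ∑ j ∈ S, β' j z < ∑ j ∈ S, β' j x := by
    intro z hz
    rw [hsumβ' z, hsumβ' x]
    have hdx : d x = K := by rw [hd]; simp
    have hdz : d z = 0 := by rw [hd]; simp [hz]
    rw [hdx, hdz]
    have hle : C z - C x ≤ Finset.univ.sup' hAne (fun w => C w - C x) :=
      Finset.le_sup' (fun w => C w - C x) (mem_univ z)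
    have : C z - C x < K := by rw [hK]; linarith
    linarith
  have hne : β' ≠ β := by
    intro h
    have h1 : ∑ j ∈ S, β' j y < ∑ j ∈ S, β' j x := hstrict y hxy
    rw [h] at h1
    exact absurd (hy x) (not_le.mpr h1)
  set M : (N → A → ℝ) → A := fun w =>
    if w = β' then x else if w = β then y
    else Classical.choose (Finset.exists_max_image Finset.univ
      (fun z => ∑ j ∈ S, w j z) hAne) with hM
  have hne' : β ≠ β' := fun h => hne h.symm
  have hMβ' : M β' = x := by simp [hM]
  have hMβ : M β = y := by simp [hM, hne']
  have hSWM : IsSWM S M := by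
    intro w z
    by_cases h1 : w = β'
    · subst h1
      rw [hMβ']
      by_cases hzx : z = x
      · subst hzx; exact le_rfl
      · exact (hstrict z hzx).le
    · by_cases h2 : w = β
      · subst h2
        rw [hMβ]
        exact hy z
      · have hMw : M w = Classical.choose (Finset.exists_max_image Finset.univ
            (fun z => ∑ j ∈ S, w j z) hAne) := by
          simp [hM, h1, h2]
        rw [hMw]
        have hspec := Classical.choose_spec (Finset.exists_max_image Finset.univ
          (fun z => ∑ j ∈ S, w j z) hAne)
        exact hspec.2 z (mem_univ z)
  have hvalid : ValidH (fun (_ : N) (_ : N → A → ℝ) => (0:ℝ)) := by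
    intro _ _ _ _; rfl
  have hexp := hb S hS M hSWM _ hvalid i hi v (fun j _ => hv j) d
  simp only [utility] at hexp
  rw [show Function.update (fun j => b j (v j)) i d = β' from rfl] at hexp
  rw [show (fun j => b j (v j)) = β from rfl] at hexp
  rw [hMβ', hMβ] at hexp
  have hrw : ∑ j ∈ S.erase i, β' j x = ∑ j ∈ S.erase i, β j x :=
    Finset.sum_congr rfl (fun j hj => by rw [hβ'erase j hj])
  rw [hrw] at hexp
  linarith [hexp]

/-- Single agent: the bid's maximum is attained only at maxima of the true valuation;
for single-minded valuations, the bid on the valued alternative strictly dominates. -/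
lemma sgap (b : N → (A → ℝ) → A → ℝ)
    (hb : ExPostClass (fun _ : N => {v : A → ℝ | ∀ a, 0 ≤ v a}) b)
    (i : N) {x x' : A} (hxx : x' ≠ x) {t : ℝ} (ht : 0 < t) :
    b i (Zval x t) x' < b i (Zval x t) x := by
  classical
  set u : A → ℝ := b i (Zval x t) with hu
  have hSne : ({i} : Finset N).Nonempty := ⟨i, mem_singleton_self i⟩
  set v : N → A → ℝ := fun _ => Zval x t with hv
  have hvnn : ∀ j, ∀ a, 0 ≤ v j a := fun j => zval_nonneg ht.le
  have hkey : ∀ y0 : A, (∀ z, u z ≤ u y0) → ∀ x0, Zval x t x0 ≤ Zval x t y0 := by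
    intro y0 hy0 x0
    have hy' : ∀ z, ∑ j ∈ ({i} : Finset N), b j (v j) z ≤
        ∑ j ∈ ({i} : Finset N), b j (v j) y0 := by
      intro z
      rw [Finset.sum_singleton, Finset.sum_singleton]
      exact hy0 z
    have := key b hb {i} hSne v hvnn i (mem_singleton_self i) y0 x0 hy'
    simpa using this
  have hmax : ∀ y0 : A, (∀ z, u z ≤ u y0) → y0 = x := by
    intro y0 hy0
    by_contra hne
    have := hkey y0 hy0 x
    rw [zval_self, zval_ne hne] at this
    linarith
  obtain ⟨y, _, hy⟩ := Finset.exists_max_image Finset.univ u ⟨x, mem_univ x⟩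
  have hyx : y = x := hmax y (fun z => hy z (mem_univ z))
  have hle : u x' ≤ u x := by rw [← hyx]; exact hy x' (mem_univ x')
  rcases lt_or_eq_of_le hle with h | h
  · exact h
  · exfalso
    have : x' = x := hmax x' (fun z => by rw [h]; rw [← hyx]; exact hy z (mem_univ z))
    exact hxx this

/-- Pair lemma: the key dichotomy for a coalition of two single-minded agents. -/
lemma pairLemma (b : N → (A → ℝ) → A → ℝ)
    (hb : ExPostClass (fun _ : N => {v : A → ℝ | ∀ a, 0 ≤ v a}) b)
    {i j : N} (hij : i ≠ j) {a a' : A} (haa : a ≠ a')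
    {s t : ℝ} (hs : 0 ≤ s) (ht : 0 < t) :
    (b j (Zval a' t) a' - b j (Zval a' t) a ≤ s ∧
      t ≤ b i (Zval a s) a - b i (Zval a s) a') ∨
    (s ≤ b j (Zval a' t) a' - b j (Zval a' t) a ∧
      b i (Zval a s) a - b i (Zval a s) a' ≤ t) := by
  classical
  set w : A → ℝ := b i (Zval a s) with hw
  set u : A → ℝ := b j (Zval a' t) with hu
  set v : N → A → ℝ := fun m => if m = i then Zval a s else Zval a' t with hv
  have hvi : v i = Zval a s := by rw [hv]; simp
  have hvj : v j = Zval a' t := by rw [hv]; simp [Ne.symm hij]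
  have hvnn : ∀ m, ∀ z, 0 ≤ v m z := by
    intro m z
    have hcase : v m = Zval a s ∨ v m = Zval a' t := by
      rw [hv]
      by_cases h : m = i
      · left; simp [h]
      · right; simp [h]
    rcases hcase with h | h <;> rw [h]
    · exact zval_nonneg hs z
    · exact zval_nonneg ht.le z
  set S : Finset N := {i, j} with hS
  have hSne : S.Nonempty := ⟨i, by rw [hS]; simp⟩
  have hiS : i ∈ S := by rw [hS]; simp
  have hjS : j ∈ S := by rw [hS]; simp
  have hsum : ∀ z, ∑ m ∈ S, b m (v m) z = w z + u z := by
    intro z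
    rw [hS, Finset.sum_pair hij, hvi, hvj]
  have heri : S.erase i = {j} := by
    rw [hS, show ({i, j} : Finset N) = insert i {j} from rfl,
      Finset.erase_insert (by simpa using hij)]
  have herj : S.erase j = {i} := by
    rw [hS, show ({i, j} : Finset N) = insert i {j} from rfl,
      Finset.erase_insert_of_ne hij, Finset.erase_singleton, insert_empty_eq]
  obtain ⟨y, _, hy⟩ := Finset.exists_max_image Finset.univ (fun z => w z + u z)
    ⟨a, mem_univ a⟩
  have hy' : ∀ z, ∑ m ∈ S, b m (v m) z ≤ ∑ m ∈ S, b m (v m) y := by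
    intro z; rw [hsum, hsum]; exact hy z (mem_univ z)
  have keyi : ∀ x0, Zval a s x0 + u x0 ≤ Zval a s y + u y := by
    intro x0
    have := key b hb S hSne v hvnn i hiS y x0 hy'
    rwa [hvi, heri, Finset.sum_singleton, Finset.sum_singleton, hvj] at this
  have keyj : ∀ x0, Zval a' t x0 + w x0 ≤ Zval a' t y + w y := by
    intro x0
    have := key b hb S hSne v hvnn j hjS y x0 hy'
    rwa [hvj, herj, Finset.sum_singleton, Finset.sum_singleton, hvi] at this
  by_cases hya : y = a
  · left
    subst hya
    constructor
    · have := keyi a'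
      rw [zval_self, zval_ne (Ne.symm haa)] at this
      linarith
    · have := keyj a'
      rw [zval_self, zval_ne haa] at this
      linarith
  · by_cases hya' : y = a'
    · right
      subst hya'
      constructor
      · have := keyi a
        rw [zval_self, zval_ne (Ne.symm haa)] at this
        linarith
      · have := keyj a
        rw [zval_self, zval_ne haa] at this
        linarith
    · exfalso
      have h1 := keyi a'
      rw [zval_ne (Ne.symm haa), zval_ne hya] at h1
      have h2 : u y < u a' := sgap b hb j hya' ht
      linarith

/-- Triple lemma: for a coalition of three single-minded agents, two of which are
single-minded on `a'`. -/
lemma tripleLemma (b : N → (A → ℝ) → A → ℝ)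
    (hb : ExPostClass (fun _ : N => {v : A → ℝ | ∀ a, 0 ≤ v a}) b)
    {i j l : N} (hij : i ≠ j) (hil : i ≠ l) (hjl : j ≠ l)
    {a a' : A} (haa : a ≠ a') {s t r : ℝ} (hs : 0 ≤ s) (ht : 0 < t) (hr : 0 < r) :
    (t + b i (Zval a s) a' + b l (Zval a' r) a' ≤ b i (Zval a s) a + b l (Zval a' r) a) ∨
    (b i (Zval a s) a + b j (Zval a' t) a ≤ r + b i (Zval a s) a' + b j (Zval a' t) a') := by
  classical
  set w : A → ℝ := b i (Zval a s) with hwd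
  set u : A → ℝ := b j (Zval a' t) with hud
  set zf : A → ℝ := b l (Zval a' r) with hzd
  set v : N → A → ℝ := fun m => if m = i then Zval a s
    else if m = j then Zval a' t else Zval a' r with hv
  have hvi : v i = Zval a s := by rw [hv]; simp
  have hvj : v j = Zval a' t := by rw [hv]; simp [Ne.symm hij]
  have hvl : v l = Zval a' r := by rw [hv]; simp [Ne.symm hil, Ne.symm hjl]
  have hvnn : ∀ m, ∀ z, 0 ≤ v m z := by
    intro m z
    have hcase : v m = Zval a s ∨ v m = Zval a' t ∨ v m = Zval a' r := by
      rw [hv]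
      by_cases h1 : m = i
      · left; simp [h1]
      · by_cases h2 : m = j
        · right; left
          subst h2
          simp [h1]
        · right; right; simp [h1, h2]
    rcases hcase with h | h | h <;> rw [h]
    · exact zval_nonneg hs z
    · exact zval_nonneg ht.le z
    · exact zval_nonneg hr.le z
  set S : Finset N := {i, j, l} with hS
  have hSne : S.Nonempty := ⟨i, by rw [hS]; simp⟩
  have hiS : i ∈ S := by rw [hS]; simp
  have hjS : j ∈ S := by rw [hS]; simp
  have hlS : l ∈ S := by rw [hS]; simp
  have hjl' : j ∉ ({l} : Finset N) := by simp [hjl]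
  have hijl : i ∉ ({j, l} : Finset N) := by simp [hij, hil]
  have hsum : ∀ z, ∑ m ∈ S, b m (v m) z = w z + u z + zf z := by
    intro z
    rw [hS, show ({i, j, l} : Finset N) = insert i (insert j {l}) from rfl,
      Finset.sum_insert hijl, Finset.sum_insert hjl', Finset.sum_singleton,
      hvi, hvj, hvl]
    ring
  have heri : S.erase i = {j, l} := by
    rw [hS, show ({i, j, l} : Finset N) = insert i {j, l} from rfl,
      Finset.erase_insert hijl]
  have herj : S.erase j = {i, l} := by
    rw [hS, show ({i, j, l} : Finset N) = insert i (insert j {l}) from rfl,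
      Finset.erase_insert_of_ne hij, Finset.erase_insert hjl']
  have herl : S.erase l = {i, j} := by
    rw [hS, show ({i, j, l} : Finset N) = insert i (insert j {l}) from rfl,
      Finset.erase_insert_of_ne hil, Finset.erase_insert_of_ne hjl,
      Finset.erase_singleton, insert_empty_eq]
  obtain ⟨y, _, hy⟩ := Finset.exists_max_image Finset.univ (fun z => w z + u z + zf z)
    ⟨a, mem_univ a⟩
  have hy' : ∀ z, ∑ m ∈ S, b m (v m) z ≤ ∑ m ∈ S, b m (v m) y := by
    intro z; rw [hsum, hsum]; exact hy z (mem_univ z)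
  have keyi : ∀ x0, Zval a s x0 + (u x0 + zf x0) ≤ Zval a s y + (u y + zf y) := by
    intro x0
    have := key b hb S hSne v hvnn i hiS y x0 hy'
    rwa [hvi, heri, Finset.sum_pair hjl, Finset.sum_pair hjl, hvj, hvl] at this
  have keyj : ∀ x0, Zval a' t x0 + (w x0 + zf x0) ≤ Zval a' t y + (w y + zf y) := by
    intro x0
    have := key b hb S hSne v hvnn j hjS y x0 hy'
    rwa [hvj, herj, Finset.sum_pair hil, Finset.sum_pair hil, hvi, hvl] at this
  have keyl : ∀ x0, Zval a' r x0 + (w x0 + u x0) ≤ Zval a' r y + (w y + u y) := by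
    intro x0
    have := key b hb S hSne v hvnn l hlS y x0 hy'
    rwa [hvl, herl, Finset.sum_pair hij, Finset.sum_pair hij, hvi, hvj] at this
  by_cases hya : y = a
  · left
    subst hya
    have := keyj a'
    rw [zval_self, zval_ne haa] at this
    linarith
  · by_cases hya' : y = a'
    · right
      subst hya'
      have := keyl a
      rw [zval_self, zval_ne haa] at this
      linarith
    · exfalso
      have h1 := keyi a'
      rw [zval_ne (Ne.symm haa), zval_ne hya] at h1
      have h2 : u y < u a' := sgap b hb j hya' ht
      have h3 : zf y < zf a' := sgap b hb l hya' hr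
      linarith

/-- Three distinct agents exist. -/
lemma three_agents (hn : 3 ≤ Fintype.card N) (i : N) :
    ∃ j l : N, i ≠ j ∧ i ≠ l ∧ j ≠ l := by
  classical
  obtain ⟨j, hj⟩ := Fintype.exists_ne_of_one_lt_card (by omega) i
  have h2 : ∃ l, l ≠ i ∧ l ≠ j := by
    by_contra h
    push_neg at h
    have hsub : (Finset.univ : Finset N) ⊆ {i, j} := by
      intro m _
      simp only [Finset.mem_insert, Finset.mem_singleton]
      rcases eq_or_ne m i with h' | h'
      · exact Or.inl h'
      · exact Or.inr (h m h')
    have hle := Finset.card_le_card hsub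
    have hc : ({i, j} : Finset N).card ≤ 2 := by
      refine le_trans (Finset.card_insert_le _ _) ?_
      simp
    rw [Finset.card_univ] at hle
    omega
  obtain ⟨l, hl1, hl2⟩ := h2
  exact ⟨j, l, Ne.symm hj, Ne.symm hl1, Ne.symm hl2⟩

/-- A real number above two others and below a third. -/
lemma exists_between2 {x y z : ℝ} (hx : x < z) (hy : y < z) :
    ∃ t, x < t ∧ y < t ∧ t < z := by
  rcases le_total x y with h | h
  · obtain ⟨t, h1, h2⟩ := exists_between hy
    exact ⟨t, lt_of_le_of_lt h h1, h1, h2⟩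
  · obtain ⟨t, h1, h2⟩ := exists_between hx
    exact ⟨t, h1, lt_of_le_of_lt h h1, h2⟩

/-- Overbidding is impossible. -/
lemma ob (b : N → (A → ℝ) → A → ℝ)
    (hb : ExPostClass (fun _ : N => {v : A → ℝ | ∀ a, 0 ≤ v a}) b)
    (hn : 3 ≤ Fintype.card N) (i : N) {a a' : A} (haa : a ≠ a')
    {s : ℝ} (hs : 0 ≤ s) :
    b i (Zval a s) a - b i (Zval a s) a' ≤ s := by
  classical
  by_contra hF
  push_neg at hF
  obtain ⟨j, l, hij, hil, hjl⟩ := three_agents hn i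
  obtain ⟨r, hrd⟩ : ∃ r : ℝ, r = (b i (Zval a s) a - b i (Zval a s) a' - s) / 2 :=
    ⟨_, rfl⟩
  have hr : 0 < r := by rw [hrd]; linarith
  have hGl : b l (Zval a' r) a < b l (Zval a' r) a' := sgap b hb l haa hr
  obtain ⟨t, hts, htGl, htF⟩ := exists_between2
    (x := s) (y := b i (Zval a s) a - b i (Zval a s) a'
      - (b l (Zval a' r) a' - b l (Zval a' r) a))
    (z := b i (Zval a s) a - b i (Zval a s) a') hF (by linarith)
  have ht : 0 < t := lt_of_le_of_lt hs hts
  have hGj : b j (Zval a' t) a' - b j (Zval a' t) a ≤ s := by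
    rcases pairLemma b hb hij haa hs ht with ⟨h1, _⟩ | ⟨_, h2⟩
    · exact h1
    · linarith
  rcases tripleLemma b hb hij hil hjl haa hs ht hr with h1 | h2
  · linarith
  · rw [hrd] at h2
    linarith

end Aux

/-- Let `n ≥ 3`, `|A| ≥ 3`, and let `b` be an ex-post equilibrium for the class of VCG
games over nonnegative valuations.  Then on a single-minded valuation the difference
between the bid on the valued alternative and any other alternative equals the value. -/
theorem stmt12 [Fintype N] [DecidableEq N] [Fintype A] [DecidableEq A]
    (hn : 3 ≤ Fintype.card N) (hA : 3 ≤ Fintype.card A)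
    (b : N → (A → ℝ) → A → ℝ)
    (hb : ExPostClass (fun _ : N => {v : A → ℝ | ∀ a, 0 ≤ v a}) b) :
    ∀ i : N, ∀ s : ℝ, 0 ≤ s → ∀ a a' : A, a' ≠ a →
      b i (Zval a s) a - b i (Zval a s) a' = s := by
  classical
  intro i s hs a a' haa'
  have haa : a ≠ a' := Ne.symm haa'
  have hub : b i (Zval a s) a - b i (Zval a s) a' ≤ s := ob b hb hn i haa hs
  have hlb : s ≤ b i (Zval a s) a - b i (Zval a s) a' := by
    by_contra hF
    push_neg at hF
    rcases eq_or_lt_of_le hs with hs0 | hs0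
    · -- s = 0
      have hz : Zval a s = Zval a' s := by
        funext z
        simp [Zval, ← hs0]
      have hob := ob b hb hn i haa' hs
      rw [← hz] at hob
      linarith
    · -- s > 0
      obtain ⟨j, l, hij, _, _⟩ := three_agents hn i
      obtain ⟨t, htF, ht, hts⟩ := exists_between2
        (x := b i (Zval a s) a - b i (Zval a s) a') (y := (0:ℝ)) (z := s) hF hs0
      have hGj : s ≤ b j (Zval a' t) a' - b j (Zval a' t) a := by
        rcases pairLemma b hb hij haa hs ht with ⟨_, h1⟩ | ⟨h2, _⟩
        · exfalso; linarith
        · exact h2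
      have hob := ob b hb hn j haa' ht.le
      linarith
  linarith
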